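/- Let δ, γ, μ ≥ 0 be real numbers with δ < √(γ²/4 + μ²) − γ/2. Then for every locally integrable function g on [0,∞) with ‖g‖_{1,δ} < ∞ there exists exactly one function Ψ on [0,∞) such that: Ψ is C¹ with Ψ(0) = 0, sup_{t≥0} e^{δt}(|Ψ(t)| + |Ψ'(t)|) < ∞, Ψ' is locally absolutely continuous with ‖Ψ''‖_{1,δ} < ∞, and −Ψ''(t) + γΨ'(t) + μ²Ψ(t) = g(t) for almost every t ∈ [0,∞). Moreover there is a constant C = C(δ,γ,μ) with sup_{t≥0} e^{δt}(|Ψ(t)| + |Ψ'(t)|) + ‖Ψ''‖_{1,δ} ≤ C ‖g‖_{1,δ}. -/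

import Mathlib

open Real Filter Set MeasureTheory Asymptotics

noncomputable section

/-- `α_p = max{((N−2)p − 2N)/2, 0}`. -/
def alphaP (N : ℕ) (p : ℝ) : ℝ := max ((((N : ℝ) - 2) * p - 2 * (N : ℝ)) / 2) 0

/-- `γ_p = (N−2)/(N+α_p)`. -/
def gammaP (N : ℕ) (p : ℝ) : ℝ := ((N : ℝ) - 2) / ((N : ℝ) + alphaP N p)

/-- `U` is bounded on `[0,∞)`. -/
def BddOn (U : ℝ → ℝ) : Prop := ∃ C : ℝ, ∀ t, 0 ≤ t → |U t| ≤ C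

/-- `U` is a C² solution of problem (P_γ):
`−(e^{−γt}U')' = e^{−t}|U|^{p−2}U` on `[0,∞)`, `U(0) = 0`. -/
def SolP (p γ : ℝ) (U : ℝ → ℝ) : Prop :=
  ContDiff ℝ 2 U ∧ U 0 = 0 ∧
  ∀ t : ℝ, 0 ≤ t →
    deriv (fun s => Real.exp (-γ * s) * deriv U s) t
      = -(Real.exp (-t) * |U t| ^ (p - 2) * U t)

/-- `U` has exactly `m` zeros in `(0,∞)`. -/
def ZeroCount (U : ℝ → ℝ) (m : ℕ) : Prop :=
  {t : ℝ | 0 < t ∧ U t = 0}.Finite ∧ {t : ℝ | 0 < t ∧ U t = 0}.ncard = m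

/-- characterization of `U_γ`: bounded solution of (P_γ) with exactly `K−1`
zeros in `(0,∞)` and positive limit at `+∞`. -/
def IsUsol (p γ : ℝ) (K : ℕ) (U : ℝ → ℝ) : Prop :=
  SolP p γ U ∧ BddOn U ∧ ZeroCount U (K - 1) ∧
    ∃ L : ℝ, 0 < L ∧ Filter.Tendsto U Filter.atTop (nhds L)

/-- `Ψ` is a bounded solution of the linearized eigenvalue problem (E_γ) with
eigenvalue `ν`: `−(e^{−γt}Ψ')' − (p−1)e^{−t}|U_γ|^{p−2}Ψ = ν e^{−γt}Ψ`, `Ψ(0)=0`. -/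
def EigenEq (p γ : ℝ) (U : ℝ → ℝ) (ν : ℝ) (Ψ : ℝ → ℝ) : Prop :=
  ContDiff ℝ 2 Ψ ∧ Ψ 0 = 0 ∧ BddOn Ψ ∧
  ∀ t : ℝ, 0 ≤ t →
    deriv (fun s => Real.exp (-γ * s) * deriv Ψ s) t
      = -((p - 1) * Real.exp (-t) * |U t| ^ (p - 2) * Ψ t + ν * Real.exp (-γ * t) * Ψ t)

/-- nontrivial on `[0,∞)`. -/
def Nontriv (Ψ : ℝ → ℝ) : Prop := ∃ t : ℝ, 0 ≤ t ∧ Ψ t ≠ 0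

/-- `ν` is a negative eigenvalue of (E_γ). -/
def IsNegEigen (p γ : ℝ) (K : ℕ) (ν : ℝ) : Prop :=
  ν < 0 ∧ ∀ U : ℝ → ℝ, IsUsol p γ K U → ∃ Ψ, EigenEq p γ U ν Ψ ∧ Nontriv Ψ

/-- `ν j γ` (for `1 ≤ j ≤ K`) enumerates the negative eigenvalues of (E_γ)
in strictly increasing order. -/
def Enumerates (p : ℝ) (K : ℕ) (γP : ℝ) (ν : ℕ → ℝ → ℝ) : Prop :=
  ∀ γ : ℝ, 0 ≤ γ → γ < γP →
    (∀ j j' : ℕ, 1 ≤ j → j < j' → j' ≤ K → ν j γ < ν j' γ) ∧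
    (∀ j : ℕ, 1 ≤ j → j ≤ K → IsNegEigen p γ K (ν j γ)) ∧
    (∀ μ : ℝ, IsNegEigen p γ K μ → ∃ j : ℕ, 1 ≤ j ∧ j ≤ K ∧ μ = ν j γ)

/-- `A` is an upper bound for `‖f‖_{1,δ} = sup_{t≥0} e^{δt}∫_t^{t+1}|f|`. -/
def Norm1Bound (δ : ℝ) (f : ℝ → ℝ) (A : ℝ) : Prop :=
  ∀ t : ℝ, 0 ≤ t → Real.exp (δ * t) * (∫ s in t..(t + 1), |f s|) ≤ A

/-- `Ψ` belongs to `W²_δ` with (a.e.) second derivative `h` and solves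
`−Ψ'' + γΨ' + μ²Ψ = g` a.e. on `[0,∞)`, `Ψ(0) = 0`. -/
def W2Sol (δ γ μ : ℝ) (g Ψ h : ℝ → ℝ) : Prop :=
  ContDiff ℝ 1 Ψ ∧ Ψ 0 = 0 ∧
  (∃ B : ℝ, ∀ t : ℝ, 0 ≤ t → Real.exp (δ * t) * (|Ψ t| + |deriv Ψ t|) ≤ B) ∧
  MeasureTheory.LocallyIntegrableOn h (Set.Ici 0) ∧
  (∀ t : ℝ, 0 ≤ t → deriv Ψ t = deriv Ψ 0 + ∫ s in (0:ℝ)..t, h s) ∧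
  (∃ B : ℝ, Norm1Bound δ h B) ∧
  (∀ᵐ t ∂(volume.restrict (Set.Ici (0:ℝ))),
    -h t + γ * deriv Ψ t + μ ^ 2 * Ψ t = g t)

namespace Stmt12Aux
lemma hasDerivAt_exp_mul (c x : ℝ) :
    HasDerivAt (fun s : ℝ => Real.exp (c * s)) (c * Real.exp (c * x)) x := by
  exact ((hasDerivAt_id x).const_mul c).exp.congr_deriv (by simp [mul_comm])

lemma hasDerivAt_primitive (f : ℝ → ℝ) (hf : Continuous f) (x : ℝ) :
    HasDerivAt (fun t => ∫ s in (0:ℝ)..t, f s) (f x) x :=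
  (hf.integral_hasStrictDerivAt 0 x).hasDerivAt

lemma linODE (w : ℝ → ℝ) (hw : Continuous w) (c : ℝ)
    (h : ∀ t : ℝ, 0 ≤ t → w t = w 0 + ∫ s in (0:ℝ)..t, c * w s) :
    ∀ t : ℝ, 0 ≤ t → w t = w 0 * Real.exp (c * t) := by
  intro T hT
  set m : ℝ → ℝ := fun t => Real.exp (-c * t) * (w 0 + ∫ s in (0:ℝ)..t, c * w s) with hm
  have hmd : ∀ x : ℝ, 0 ≤ x → HasDerivAt m 0 x := by
    intro x hx
    have h1 : HasDerivAt (fun t => w 0 + ∫ s in (0:ℝ)..t, c * w s) (c * w x) x :=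
      (hasDerivAt_primitive _ (continuous_const.mul hw) x).const_add (w 0)
    have h2 := (hasDerivAt_exp_mul (-c) x).mul h1
    refine h2.congr_deriv ?_
    rw [← h x hx]; ring
  have hmcont : Continuous m := by
    apply Continuous.mul
    · fun_prop
    · exact continuous_const.add (intervalIntegral.continuous_primitive
        (fun a b => (continuous_const.mul hw).intervalIntegrable a b) 0)
  have key := constant_of_has_deriv_right_zero (f := m) (a := 0) (b := T) hmcont.continuousOn
      (fun x hx => (hmd x hx.1).hasDerivWithinAt)
  have hmT : m T = m 0 := key T (right_mem_Icc.2 hT)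
  have hm0 : m 0 = w 0 := by simp [hm]
  have hx : Real.exp (-c * T) * w T = w 0 := by
    rw [← hm0, ← hmT, hm]; simp only []
    rw [← h T hT]
  have hpos := Real.exp_pos (-c * T)
  have hexp : Real.exp (-c * T) * Real.exp (c * T) = 1 := by
    rw [← Real.exp_add]; simp
  linear_combination Real.exp (c * T) * hx - w T * hexp

lemma integral_exp_mul' (c : ℝ) (hc : c ≠ 0) (x y : ℝ) :
    ∫ s in x..y, Real.exp (c * s) = (Real.exp (c * y) - Real.exp (c * x)) / c := by
  have D : ∀ t : ℝ, HasDerivAt (fun s : ℝ => Real.exp (c * s) / c) (Real.exp (c * t)) t := by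
    intro t
    have := (hasDerivAt_exp_mul c t).div_const c
    simpa [mul_div_assoc, mul_div_cancel_left₀ _ hc] using this
  rw [intervalIntegral.integral_eq_sub_of_hasDerivAt (fun t _ => D t)
    ((by fun_prop : Continuous fun s : ℝ => Real.exp (c * s)).intervalIntegrable x y)]
  ring

lemma parts_meas (q : ℝ → ℝ) (hqm : Measurable q)
    (hqI : ∀ x y : ℝ, IntervalIntegrable q volume x y) (a t : ℝ) (ha : a ≠ 0) (ht : 0 ≤ t) :
    ∫ s in (0:ℝ)..t, a * Real.exp (a * s) * ∫ τ in (0:ℝ)..s, q τ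
      = Real.exp (a * t) * (∫ τ in (0:ℝ)..t, q τ) - ∫ s in (0:ℝ)..t, Real.exp (a * s) * q s := by
  have hIm : MeasurableSet (Ioc (0:ℝ) t) := measurableSet_Ioc
  have hqint : IntegrableOn q (Ioc (0:ℝ) t) volume :=
    (intervalIntegrable_iff_integrableOn_Ioc_of_le ht).1 (hqI 0 t)
  set ν := volume.restrict (Ioc (0:ℝ) t) with hν
  haveI : IsFiniteMeasure ν := by
    constructor; rw [hν, Measure.restrict_apply_univ]; exact measure_Ioc_lt_top
  set K : ℝ × ℝ → ℝ := fun p => if p.2 ≤ p.1 then a * Real.exp (a * p.1) * q p.2 else 0 with hK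
  have hKmeas : Measurable K := by
    refine Measurable.ite (measurableSet_le measurable_snd measurable_fst) ?_ measurable_const
    exact (measurable_const.mul (Real.measurable_exp.comp (measurable_fst.const_mul a))).mul
      (hqm.comp measurable_snd)
  have hKint : Integrable K (ν.prod ν) := by
    have hmaj : Integrable (fun p : ℝ × ℝ => (|a| * Real.exp (|a| * t)) * |q p.2|) (ν.prod ν) :=
      (integrable_const (|a| * Real.exp (|a| * t))).mul_prod hqint.abs
    refine Integrable.mono' hmaj hKmeas.aestronglyMeasurable ?_
    rw [hν, Measure.prod_restrict]
    refine (ae_restrict_iff' (hIm.prod hIm)).2 (Filter.Eventually.of_forall ?_)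
    rintro ⟨s, τ⟩ ⟨hs, hτ⟩
    simp only [hK]
    split_ifs with hcase
    · rw [Real.norm_eq_abs, abs_mul, abs_mul, abs_of_pos (Real.exp_pos _)]
      have h1 : Real.exp (a * s) ≤ Real.exp (|a| * t) := by
        apply Real.exp_le_exp.2
        have h2 : a * s ≤ |a| * s := mul_le_mul_of_nonneg_right (le_abs_self a) hs.1.le
        have h3 : |a| * s ≤ |a| * t := mul_le_mul_of_nonneg_left hs.2 (abs_nonneg a)
        linarith
      have := mul_le_mul_of_nonneg_right (mul_le_mul_of_nonneg_left h1 (abs_nonneg a)) (abs_nonneg (q τ))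
      linarith
    · simp only [norm_zero]; positivity
  have hswap := MeasureTheory.integral_integral_swap (f := fun s τ => K (s, τ))
    (μ := ν) (ν := ν) hKint
  have hL : ∀ s ∈ Ioc (0:ℝ) t, (∫ τ, K (s, τ) ∂ν) = a * Real.exp (a * s) * ∫ τ in (0:ℝ)..s, q τ := by
    intro s hs
    have heq : (fun τ => K (s, τ)) = (Iic s).indicator (fun τ => a * Real.exp (a * s) * q τ) := by
      funext τ; simp [hK, Set.indicator_apply, Set.mem_Iic]
    rw [hν, heq, setIntegral_indicator measurableSet_Iic,
      show Ioc (0:ℝ) t ∩ Iic s = Ioc 0 s by rw [Set.Ioc_inter_Iic, min_eq_right hs.2],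
      ← intervalIntegral.integral_of_le hs.1.le, intervalIntegral.integral_const_mul]
  have hR : ∀ τ ∈ Ioc (0:ℝ) t, (∫ s, K (s, τ) ∂ν)
      = (Real.exp (a * t) - Real.exp (a * τ)) * q τ := by
    intro τ hτ
    have heq : (fun s => K (s, τ)) = (Ici τ).indicator (fun s => a * Real.exp (a * s) * q τ) := by
      funext s; simp [hK, Set.indicator_apply, Set.mem_Ici]
    rw [hν, heq, setIntegral_indicator measurableSet_Ici,
      show Ioc (0:ℝ) t ∩ Ici τ = Icc τ t by
        ext x; simp only [Set.mem_inter_iff, Set.mem_Ioc, Set.mem_Ici, Set.mem_Icc]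
        constructor
        · rintro ⟨⟨_, h2⟩, h3⟩; exact ⟨h3, h2⟩
        · rintro ⟨h1, h2⟩; exact ⟨⟨lt_of_lt_of_le hτ.1 h1, h2⟩, h1⟩,
      integral_Icc_eq_integral_Ioc, ← intervalIntegral.integral_of_le hτ.2,
      intervalIntegral.integral_mul_const, intervalIntegral.integral_const_mul,
      integral_exp_mul' a ha]
    field_simp
  have e1 : ∫ s in (0:ℝ)..t, a * Real.exp (a * s) * ∫ τ in (0:ℝ)..s, q τ
      = ∫ s, (∫ τ, K (s, τ) ∂ν) ∂ν := by
    rw [intervalIntegral.integral_of_le ht]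
    exact (setIntegral_congr_fun hIm hL).symm
  have hint2 : Integrable (fun τ => Real.exp (a * τ) * q τ) ν := by
    rw [hν]
    exact (intervalIntegrable_iff_integrableOn_Ioc_of_le ht).1
      ((hqI 0 t).continuousOn_mul (Continuous.continuousOn (by fun_prop)))
  have e2 : ∫ τ, (∫ s, K (s, τ) ∂ν) ∂ν
      = Real.exp (a * t) * (∫ τ in (0:ℝ)..t, q τ) - ∫ s in (0:ℝ)..t, Real.exp (a * s) * q s := by
    rw [setIntegral_congr_fun (μ := volume) hIm hR]
    rw [show (fun τ => (Real.exp (a * t) - Real.exp (a * τ)) * q τ)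
        = fun τ => Real.exp (a * t) * q τ - Real.exp (a * τ) * q τ from funext fun τ => by ring]
    rw [integral_sub (hqint.const_mul _) hint2, integral_const_mul,
      ← intervalIntegral.integral_of_le ht, ← intervalIntegral.integral_of_le ht]
  rw [e1, hswap, e2]

lemma locIntegrable_mul_cont (G φ : ℝ → ℝ) (hG : MeasureTheory.LocallyIntegrable G volume)
    (hφ : Continuous φ) : MeasureTheory.LocallyIntegrable (fun s => φ s * G s) volume := by
  rw [MeasureTheory.locallyIntegrable_iff]
  intro k hk
  exact IntegrableOn.continuousOn_mul hφ.continuousOn (hG.integrableOn_isCompact hk) hk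

lemma parts (q : ℝ → ℝ) (hq : MeasureTheory.LocallyIntegrable q volume)
    (a t : ℝ) (ha : a ≠ 0) (ht : 0 ≤ t) :
    ∫ s in (0:ℝ)..t, a * Real.exp (a * s) * ∫ τ in (0:ℝ)..s, q τ
      = Real.exp (a * t) * (∫ τ in (0:ℝ)..t, q τ)
        - ∫ s in (0:ℝ)..t, Real.exp (a * s) * q s := by
  set q' := (hq.aestronglyMeasurable).mk q with hq'def
  have hmeas : StronglyMeasurable q' := (hq.aestronglyMeasurable).stronglyMeasurable_mk
  have heq : q =ᵐ[volume] q' := (hq.aestronglyMeasurable).ae_eq_mk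
  have hqI : ∀ x y : ℝ, IntervalIntegrable q volume x y := fun x y =>
    IntegrableOn.intervalIntegrable (hq.integrableOn_isCompact isCompact_uIcc)
  have hq'I : ∀ x y : ℝ, IntervalIntegrable q' volume x y := fun x y =>
    (hqI x y).congr_ae (ae_restrict_of_ae heq)
  have hIeq : ∀ x y : ℝ, ∫ s in x..y, q s = ∫ s in x..y, q' s := fun x y =>
    intervalIntegral.integral_congr_ae (heq.mono fun s hs _ => hs)
  have hIeq2 : ∫ s in (0:ℝ)..t, Real.exp (a * s) * q s
      = ∫ s in (0:ℝ)..t, Real.exp (a * s) * q' s :=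
    intervalIntegral.integral_congr_ae (heq.mono fun s hs _ => by rw [hs])
  have hcore := parts_meas q' hmeas.measurable hq'I a t ha ht
  rw [hIeq 0 t, hIeq2, ← hcore]
  apply intervalIntegral.integral_congr
  intro s _
  simp only [hIeq 0 s]

lemma norm1_nonneg (δ A : ℝ) (f : ℝ → ℝ) (hA : Norm1Bound δ f A) : 0 ≤ A := by
  have h := hA 0 le_rfl
  simp only [mul_zero, Real.exp_zero, one_mul, zero_add] at h
  exact le_trans (intervalIntegral.integral_nonneg (by norm_num) fun u _ => abs_nonneg _) h

def Cu (δ a : ℝ) : ℝ := (1 - Real.exp (-(a + δ)))⁻¹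
def Cp (δ a b : ℝ) : ℝ := Cu δ a * (-(b + δ))⁻¹
def Cq (δ a b : ℝ) : ℝ := Cu δ a + (-b) * Cp δ a b

lemma exists_sol (δ a b A₀ : ℝ) (G : ℝ → ℝ) (hG : MeasureTheory.LocallyIntegrable G volume)
    (hδ0 : 0 ≤ δ) (ha : 0 < a) (hbδ : b + δ < 0) (hA₀ : Norm1Bound δ G A₀) :
    ∃ Ψ : ℝ → ℝ, ContDiff ℝ 1 Ψ ∧ Ψ 0 = 0 ∧
      (∀ A : ℝ, Norm1Bound δ G A → ∀ t : ℝ, 0 ≤ t →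
        |Ψ t| ≤ Cp δ a b * A * Real.exp (-(δ * t)) ∧
        |deriv Ψ t| ≤ Cq δ a b * A * Real.exp (-(δ * t))) ∧
      ∀ t : ℝ, 0 ≤ t → deriv Ψ t = deriv Ψ 0 + ∫ s in (0:ℝ)..t,
        ((a + b) * deriv Ψ s - a * b * Ψ s - G s) := by
  have hb : b < 0 := by linarith
  have haδ : 0 < a + δ := by linarith
  have hGI : ∀ x y : ℝ, IntervalIntegrable G volume x y := fun x y =>
    IntegrableOn.intervalIntegrable (hG.integrableOn_isCompact isCompact_uIcc)
  set q : ℝ → ℝ := fun s => Real.exp (-a * s) * G s with hqdef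
  have hqloc : MeasureTheory.LocallyIntegrable q volume :=
    locIntegrable_mul_cont G _ hG (by fun_prop)
  have hqI : ∀ x y : ℝ, IntervalIntegrable q volume x y := fun x y =>
    IntegrableOn.intervalIntegrable (hqloc.integrableOn_isCompact isCompact_uIcc)
  set P : ℝ → ℝ := fun τ => ∫ s in (0:ℝ)..τ, q s with hPdef
  have hPcont : Continuous P := intervalIntegral.continuous_primitive hqI 0
  set r : ℝ := Real.exp (-(a + δ)) with hrdef
  have hr0 : 0 < r := Real.exp_pos _
  have hr1 : r < 1 := Real.exp_lt_one_iff.2 (by linarith)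
  have hstep : ∀ A : ℝ, Norm1Bound δ G A → ∀ T : ℝ, 0 ≤ T →
      ∫ s in T..(T + 1), |q s| ≤ A * Real.exp (-((a + δ) * T)) := by
    intro A hA T hT
    have hq1 : ∫ s in T..(T+1), |q s| ≤ ∫ s in T..(T+1), Real.exp (-a * T) * |G s| := by
      apply intervalIntegral.integral_mono_on (by linarith) ((hqI T (T+1)).abs)
        (((hGI T (T+1)).abs).const_mul _)
      intro x hx
      have h2 : -a * x ≤ -a * T := by nlinarith [hx.1]
      simp only [hqdef]
      rw [abs_mul, abs_of_pos (Real.exp_pos _)]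
      exact mul_le_mul_of_nonneg_right (Real.exp_le_exp.2 h2) (abs_nonneg _)
    have hq2 : ∫ s in T..(T+1), Real.exp (-a * T) * |G s|
        = Real.exp (-a * T) * ∫ s in T..(T+1), |G s| :=
      intervalIntegral.integral_const_mul _ _
    have hGb : ∫ s in T..(T+1), |G s| ≤ A * Real.exp (-(δ * T)) := by
      have h := hA T hT
      rw [mul_comm] at h
      have hepos : (0:ℝ) < Real.exp (δ * T) := Real.exp_pos _
      rw [Real.exp_neg, show A * (Real.exp (δ * T))⁻¹ = A / Real.exp (δ * T) from by ring,
        le_div_iff₀ hepos]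
      exact h
    calc ∫ s in T..(T+1), |q s| ≤ Real.exp (-a * T) * ∫ s in T..(T+1), |G s| := by
          rw [← hq2]; exact hq1
      _ ≤ Real.exp (-a * T) * (A * Real.exp (-(δ * T))) :=
          mul_le_mul_of_nonneg_left hGb (Real.exp_pos _).le
      _ = A * Real.exp (-((a + δ) * T)) := by
          rw [show Real.exp (-a * T) * (A * Real.exp (-(δ * T)))
              = A * (Real.exp (-a * T) * Real.exp (-(δ * T))) from by ring, ← Real.exp_add]
          congr 2
          ring
  have hparts' : ∀ A : ℝ, Norm1Bound δ G A → ∀ T : ℝ, 0 ≤ T → ∀ n : ℕ,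
      ∫ s in T..(T + n), |q s| ≤ A * Real.exp (-((a + δ) * T)) * (1 - r)⁻¹ := by
    intro A hA T hT n
    have hA0 : 0 ≤ A := norm1_nonneg δ A G hA
    have hr1' : (0:ℝ) < 1 - r := by linarith
    have hsum_le : (∑ k ∈ Finset.range n, r ^ k) ≤ (1 - r)⁻¹ := by
      rw [geom_sum_eq (by linarith : r ≠ 1) n,
        show (r ^ n - 1)/(r - 1) = (1 - r ^ n)/(1 - r) from by
          rw [div_eq_div_iff (by linarith) (by linarith)]; ring,
        inv_eq_one_div]
      have h1 : 1 - r ^ n ≤ 1 := by nlinarith [pow_pos hr0 n]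
      exact (div_le_div_iff_of_pos_right hr1').2 h1
    have hind : ∀ m : ℕ, ∫ s in T..(T + (m:ℝ)), |q s|
        ≤ A * Real.exp (-((a + δ) * T)) * ∑ k ∈ Finset.range m, r ^ k := by
      intro m
      induction m with
      | zero => simp
      | succ m ih =>
        have hadd := intervalIntegral.integral_add_adjacent_intervals (μ := volume)
          (a := T) (b := T + (m:ℝ)) (c := T + (m:ℝ) + 1)
          ((hqI _ _).abs) ((hqI _ _).abs)
        have h2 := hstep A hA (T + (m:ℝ)) (by positivity)
        have h3 : Real.exp (-((a + δ) * (T + (m:ℝ))))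
            = Real.exp (-((a + δ) * T)) * r ^ m := by
          rw [hrdef, ← Real.exp_nat_mul, ← Real.exp_add]
          congr 1; ring
        rw [h3] at h2
        push_cast
        rw [show T + ((m:ℝ) + 1) = T + (m:ℝ) + 1 from by ring, Finset.sum_range_succ, mul_add]
        linarith
    have := hind n
    refine le_trans this ?_
    exact mul_le_mul_of_nonneg_left hsum_le (by positivity)
  have hseq : CauchySeq (fun n : ℕ => P n) := by
    apply cauchySeq_of_le_geometric r A₀ hr1
    intro n
    rw [dist_eq_norm, Real.norm_eq_abs]
    have hadd := intervalIntegral.integral_add_adjacent_intervals (μ := volume)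
      (a := (0:ℝ)) (b := (n:ℝ)) (c := (n:ℝ) + 1) (hqI _ _) (hqI _ _)
    have h1 : P (n:ℝ) - P ((n:ℝ) + 1) = -∫ s in (n:ℝ)..((n:ℝ) + 1), q s := by
      simp only [hPdef]; linarith
    push_cast
    rw [h1, abs_neg]
    calc |∫ s in (n:ℝ)..((n:ℝ) + 1), q s| ≤ ∫ s in (n:ℝ)..((n:ℝ) + 1), |q s| :=
        intervalIntegral.abs_integral_le_integral_abs (by linarith)
      _ ≤ A₀ * Real.exp (-((a + δ) * (n:ℝ))) := hstep A₀ hA₀ (n:ℝ) (Nat.cast_nonneg n)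
      _ = A₀ * r ^ n := by
          rw [hrdef, ← Real.exp_nat_mul]
          congr 2; ring
  obtain ⟨c, hc⟩ := cauchySeq_tendsto_of_complete hseq
  have htail : ∀ A : ℝ, Norm1Bound δ G A → ∀ t : ℝ, 0 ≤ t →
      |c - P t| ≤ A * Real.exp (-((a + δ) * t)) * (1 - r)⁻¹ := by
    intro A hA t ht
    have htend : Tendsto (fun n : ℕ => |P n - P t|) atTop (nhds |c - P t|) :=
      (hc.sub_const (P t)).abs
    refine le_of_tendsto htend ?_
    filter_upwards [eventually_ge_atTop ⌈t⌉₊] with n hn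
    have hnt : t ≤ (n:ℝ) := le_trans (Nat.le_ceil t) (Nat.cast_le.2 hn)
    have hPP : P (n:ℝ) - P t = ∫ s in t..(n:ℝ), q s := by
      have h := intervalIntegral.integral_add_adjacent_intervals (μ := volume)
        (a := (0:ℝ)) (b := t) (c := (n:ℝ)) (hqI _ _) (hqI _ _)
      simp only [hPdef]; linarith
    rw [hPP]
    have h5 : |∫ s in t..(n:ℝ), q s| ≤ ∫ s in t..(n:ℝ), |q s| :=
      intervalIntegral.abs_integral_le_integral_abs hnt
    have h6 : ∫ s in t..(n:ℝ), |q s| ≤ ∫ s in t..(t + (n:ℝ)), |q s| := by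
      have hadd := intervalIntegral.integral_add_adjacent_intervals (μ := volume)
        (a := t) (b := (n:ℝ)) (c := t + (n:ℝ)) ((hqI _ _).abs) ((hqI _ _).abs)
      have hnn : 0 ≤ ∫ s in (n:ℝ)..(t + (n:ℝ)), |q s| :=
        intervalIntegral.integral_nonneg (by linarith) fun v _ => abs_nonneg _
      linarith
    exact le_trans h5 (le_trans h6 (hparts' A hA t ht n))
  set u : ℝ → ℝ := fun τ => Real.exp (a * τ) * (c - P τ) with hudef
  have hucont : Continuous u :=
    (by fun_prop : Continuous fun τ : ℝ => Real.exp (a * τ)).mul (continuous_const.sub hPcont)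
  have hub : ∀ A : ℝ, Norm1Bound δ G A → ∀ t : ℝ, 0 ≤ t →
      |u t| ≤ Cu δ a * A * Real.exp (-(δ * t)) := by
    intro A hA t ht
    have h1 := htail A hA t ht
    have hexp : Real.exp (a * t) * Real.exp (-((a + δ) * t)) = Real.exp (-(δ * t)) := by
      rw [← Real.exp_add]; congr 1; ring
    have hut : |u t| = Real.exp (a * t) * |c - P t| := by
      simp only [hudef]; rw [abs_mul, abs_of_pos (Real.exp_pos _)]
    rw [hut]
    calc Real.exp (a * t) * |c - P t|
        ≤ Real.exp (a * t) * (A * Real.exp (-((a + δ) * t)) * (1 - r)⁻¹) :=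
          mul_le_mul_of_nonneg_left h1 (Real.exp_pos _).le
      _ = (Real.exp (a * t) * Real.exp (-((a + δ) * t))) * A * (1 - r)⁻¹ := by ring
      _ = Cu δ a * A * Real.exp (-(δ * t)) := by
          rw [hexp]; simp only [Cu]; rw [← hrdef]; ring
  have hu0 : u 0 = c := by simp [hudef, hPdef]
  have huint : ∀ t : ℝ, 0 ≤ t → u t - u 0 = ∫ s in (0:ℝ)..t, (a * u s - G s) := by
    intro t ht
    have hpar := parts q hqloc a t (ne_of_gt ha) ht
    have hint1 : IntervalIntegrable (fun s => a * u s) volume 0 t :=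
      (continuous_const.mul hucont).intervalIntegrable 0 t
    have e1 : ∫ s in (0:ℝ)..t, (a * u s - G s)
        = (∫ s in (0:ℝ)..t, a * u s) - ∫ s in (0:ℝ)..t, G s :=
      intervalIntegral.integral_sub hint1 (hGI 0 t)
    have e2 : ∫ s in (0:ℝ)..t, a * u s
        = a * c * ((Real.exp (a * t) - 1) / a)
          - ∫ s in (0:ℝ)..t, a * Real.exp (a * s) * P s := by
      have hco : ∀ s ∈ uIcc (0:ℝ) t,
          a * u s = a * c * Real.exp (a * s) - a * Real.exp (a * s) * P s := by
        intro s _; simp only [hudef]; ring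
      rw [intervalIntegral.integral_congr hco]
      have i1 : IntervalIntegrable (fun s : ℝ => a * c * Real.exp (a * s)) volume 0 t :=
        Continuous.intervalIntegrable (by fun_prop) 0 t
      have i2 : IntervalIntegrable (fun s : ℝ => a * Real.exp (a * s) * P s) volume 0 t :=
        Continuous.intervalIntegrable
          ((continuous_const.mul (by fun_prop : Continuous fun s : ℝ => Real.exp (a * s))).mul
            hPcont) 0 t
      rw [intervalIntegral.integral_sub i1 i2, intervalIntegral.integral_const_mul,
        integral_exp_mul' a (ne_of_gt ha), mul_zero, Real.exp_zero]
    have e3 : ∫ s in (0:ℝ)..t, a * Real.exp (a * s) * P s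
        = Real.exp (a * t) * P t - ∫ s in (0:ℝ)..t, G s := by
      have hre : (fun s => a * Real.exp (a * s) * P s)
          = fun s => a * Real.exp (a * s) * ∫ τ in (0:ℝ)..s, q τ := rfl
      rw [hre, hpar]
      have e4 : ∫ s in (0:ℝ)..t, Real.exp (a * s) * q s = ∫ s in (0:ℝ)..t, G s := by
        apply intervalIntegral.integral_congr
        intro s _
        simp only [hqdef]
        rw [← mul_assoc, ← Real.exp_add, show a * s + -a * s = 0 from by ring, Real.exp_zero,
          one_mul]
      rw [e4]
    have hut : u t = Real.exp (a * t) * (c - P t) := rfl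
    rw [e1, e2, e3, hu0, hut,
      show a * c * ((Real.exp (a * t) - 1) / a) = c * (Real.exp (a * t) - 1) from by
        field_simp]
    ring
  set Q : ℝ → ℝ := fun τ => ∫ s in (0:ℝ)..τ, Real.exp (-b * s) * u s with hQdef
  have hQcont : Continuous Q := intervalIntegral.continuous_primitive
    (fun x y => ((by fun_prop : Continuous fun s : ℝ => Real.exp (-b * s)).mul
      hucont).intervalIntegrable x y) 0
  set Ψ : ℝ → ℝ := fun τ => Real.exp (b * τ) * Q τ with hΨdef
  have hΨcont : Continuous Ψ :=
    (by fun_prop : Continuous fun τ : ℝ => Real.exp (b * τ)).mul hQcont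
  have hQd : ∀ x : ℝ, HasDerivAt Q (Real.exp (-b * x) * u x) x := fun x =>
    hasDerivAt_primitive _ ((by fun_prop : Continuous fun s : ℝ => Real.exp (-b * s)).mul hucont) x
  have hΨd : ∀ x : ℝ, HasDerivAt Ψ (u x + b * Ψ x) x := by
    intro x
    have h2 := (hasDerivAt_exp_mul b x).mul (hQd x)
    refine h2.congr_deriv ?_
    have hone : Real.exp (b * x) * Real.exp (-b * x) = 1 := by
      rw [← Real.exp_add, show b * x + -b * x = 0 from by ring, Real.exp_zero]
    simp only [hΨdef]
    linear_combination (u x) * hone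
  have hderivΨ : deriv Ψ = fun x => u x + b * Ψ x := funext fun x => (hΨd x).deriv
  have hC1 : ContDiff ℝ 1 Ψ := contDiff_one_iff_deriv.2
    ⟨fun x => (hΨd x).differentiableAt, by
      rw [hderivΨ]; exact hucont.add (continuous_const.mul hΨcont)⟩
  have hΨ0 : Ψ 0 = 0 := by simp [hΨdef, hQdef]
  refine ⟨Ψ, hC1, hΨ0, ?_, ?_⟩
  · intro A hA t ht
    have hA0 : 0 ≤ A := norm1_nonneg δ A G hA
    have hκ : 0 < -(b + δ) := by linarith
    have hCu : 0 < Cu δ a := by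
      simp only [Cu]
      rw [inv_pos]
      have hlt := Real.exp_lt_one_iff.2 (show -(a + δ) < 0 from by linarith)
      linarith
    have hQb : |Q t| ≤ Cu δ a * A * ((Real.exp (-(b + δ) * t) - 1) / (-(b + δ))) := by
      calc |Q t| ≤ ∫ s in (0:ℝ)..t, |Real.exp (-b * s) * u s| :=
          intervalIntegral.abs_integral_le_integral_abs ht
        _ ≤ ∫ s in (0:ℝ)..t, Cu δ a * A * Real.exp (-(b + δ) * s) := by
            apply intervalIntegral.integral_mono_on ht
              (Continuous.intervalIntegrable
                (((by fun_prop : Continuous fun s : ℝ => Real.exp (-b * s)).mul hucont).abs) 0 t)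
              (Continuous.intervalIntegrable (by fun_prop) 0 t)
            intro x hx
            simp only [Pi.mul_apply]
            rw [abs_mul, abs_of_pos (Real.exp_pos _)]
            calc Real.exp (-b * x) * |u x|
                ≤ Real.exp (-b * x) * (Cu δ a * A * Real.exp (-(δ * x))) :=
                  mul_le_mul_of_nonneg_left (hub A hA x hx.1) (Real.exp_pos _).le
              _ = Cu δ a * A * (Real.exp (-b * x) * Real.exp (-(δ * x))) := by ring
              _ = Cu δ a * A * Real.exp (-(b + δ) * x) := by
                  rw [← Real.exp_add]; congr 2; ring
        _ = Cu δ a * A * ((Real.exp (-(b + δ) * t) - 1) / (-(b + δ))) := by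
            rw [intervalIntegral.integral_const_mul,
              integral_exp_mul' (-(b + δ)) (ne_of_gt hκ), mul_zero, Real.exp_zero]
    have hΨb : |Ψ t| ≤ Cp δ a b * A * Real.exp (-(δ * t)) := by
      have hm : |Ψ t| = Real.exp (b * t) * |Q t| := by
        simp only [hΨdef]; rw [abs_mul, abs_of_pos (Real.exp_pos _)]
      rw [hm]
      have step1 : Real.exp (b * t) * |Q t|
          ≤ Real.exp (b * t) * (Cu δ a * A * ((Real.exp (-(b + δ) * t) - 1) / (-(b + δ)))) :=
        mul_le_mul_of_nonneg_left hQb (Real.exp_pos _).le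
      refine le_trans step1 ?_
      have hexp2 : Real.exp (b * t) * Real.exp (-(b + δ) * t) = Real.exp (-(δ * t)) := by
        rw [← Real.exp_add]; congr 1; ring
      have hCuA : 0 ≤ Cu δ a * A := mul_nonneg hCu.le hA0
      have hend : Real.exp (b * t) * (Cu δ a * A * ((Real.exp (-(b + δ) * t) - 1) / (-(b + δ))))
          = Cu δ a * A * ((Real.exp (b * t) * Real.exp (-(b + δ) * t) - Real.exp (b * t))
              / (-(b + δ))) := by
        field_simp
      rw [hend, hexp2]
      have hdiv : (Real.exp (-(δ * t)) - Real.exp (b * t)) / (-(b + δ))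
          ≤ Real.exp (-(δ * t)) * (-(b + δ))⁻¹ := by
        rw [div_eq_mul_inv]
        exact mul_le_mul_of_nonneg_right (by linarith [Real.exp_pos (b * t)])
          (inv_nonneg.2 hκ.le)
      calc Cu δ a * A * ((Real.exp (-(δ * t)) - Real.exp (b * t)) / (-(b + δ)))
          ≤ Cu δ a * A * (Real.exp (-(δ * t)) * (-(b + δ))⁻¹) :=
            mul_le_mul_of_nonneg_left hdiv hCuA
        _ = Cp δ a b * A * Real.exp (-(δ * t)) := by simp only [Cp]; ring
    refine ⟨hΨb, ?_⟩
    have hd : deriv Ψ t = u t + b * Ψ t := by rw [hderivΨ]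
    rw [hd]
    have habs : |u t + b * Ψ t| ≤ |u t| + (-b) * |Ψ t| := by
      calc |u t + b * Ψ t| ≤ |u t| + |b * Ψ t| := abs_add_le _ _
        _ = |u t| + (-b) * |Ψ t| := by rw [abs_mul b (Ψ t), abs_of_neg hb]
    refine le_trans habs ?_
    have h1 := hub A hA t ht
    have h2 := mul_le_mul_of_nonneg_left hΨb (show (0:ℝ) ≤ -b from by linarith)
    calc |u t| + (-b) * |Ψ t|
        ≤ Cu δ a * A * Real.exp (-(δ * t)) + (-b) * (Cp δ a b * A * Real.exp (-(δ * t))) :=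
          add_le_add h1 h2
      _ = Cq δ a b * A * Real.exp (-(δ * t)) := by simp only [Cq]; ring
  · intro t ht
    have hFTC : Ψ t = ∫ s in (0:ℝ)..t, (u s + b * Ψ s) := by
      have h := intervalIntegral.integral_eq_sub_of_hasDerivAt (f := Ψ)
        (f' := fun s => u s + b * Ψ s) (fun s _ => hΨd s)
        ((hucont.add (continuous_const.mul hΨcont)).intervalIntegrable 0 t)
      rw [h, hΨ0, sub_zero]
    have hintid : ∫ s in (0:ℝ)..t, ((a + b) * (u s + b * Ψ s) - a * b * Ψ s - G s)
        = (∫ s in (0:ℝ)..t, (a * u s - G s)) + b * ∫ s in (0:ℝ)..t, (u s + b * Ψ s) := by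
      rw [← intervalIntegral.integral_const_mul,
        ← intervalIntegral.integral_add (f := fun s => a * u s - G s)
          (g := fun s => b * (u s + b * Ψ s))
          (((continuous_const.mul hucont).intervalIntegrable 0 t).sub (hGI 0 t))
          (Continuous.intervalIntegrable
            (continuous_const.mul (hucont.add (continuous_const.mul hΨcont))) 0 t)]
      apply intervalIntegral.integral_congr
      intro s _
      ring
    simp only [hderivΨ]
    rw [hintid, hΨ0, ← hFTC]
    linarith [huint t ht]


lemma uniq (δ γ μ a b : ℝ) (g Ψ₁ h₁ Ψ₂ h₂ : ℝ → ℝ)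
    (hδ0 : 0 ≤ δ) (ha : 0 < a) (hb : b < 0)
    (hsum : a + b = γ) (hmul : a * b = -μ ^ 2)
    (H1 : W2Sol δ γ μ g Ψ₁ h₁) (H2 : W2Sol δ γ μ g Ψ₂ h₂) :
    Set.EqOn Ψ₁ Ψ₂ (Set.Ici 0) := by
  obtain ⟨hC1, h01, ⟨B1, hB1⟩, hloc1, hint1, -, hode1⟩ := H1
  obtain ⟨hC2, h02, ⟨B2, hB2⟩, hloc2, hint2, -, hode2⟩ := H2
  have hd1 : Differentiable ℝ Ψ₁ := hC1.differentiable one_ne_zero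
  have hd2 : Differentiable ℝ Ψ₂ := hC2.differentiable one_ne_zero
  set Φ : ℝ → ℝ := fun t => Ψ₁ t - Ψ₂ t with hΦdef
  have hΦd : Differentiable ℝ Φ := hd1.sub hd2
  have hdΦ : deriv Φ = fun t => deriv Ψ₁ t - deriv Ψ₂ t :=
    funext fun t => deriv_sub (hd1 t) (hd2 t)
  have hcd1 : Continuous (deriv Ψ₁) := hC1.continuous_deriv le_rfl
  have hcd2 : Continuous (deriv Ψ₂) := hC2.continuous_deriv le_rfl
  have hΦcont : Continuous Φ := (hC1.continuous).sub (hC2.continuous)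
  have hΦ'cont : Continuous (deriv Φ) := by rw [hdΦ]; exact hcd1.sub hcd2
  have hΦ0 : Φ 0 = 0 := by simp [hΦdef, h01, h02]
  -- interval integrability of h₁, h₂ on [0,t]
  have hII : ∀ (h : ℝ → ℝ), MeasureTheory.LocallyIntegrableOn h (Set.Ici 0) →
      ∀ t : ℝ, 0 ≤ t → IntervalIntegrable h volume 0 t := by
    intro h hloc t ht
    rw [intervalIntegrable_iff_integrableOn_Icc_of_le ht]
    exact hloc.integrableOn_compact_subset (fun x hx => hx.1) isCompact_Icc
  -- a.e. relation between h₁ - h₂ and Φ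
  have haeq : ∀ᵐ s ∂(volume.restrict (Set.Ici (0:ℝ))),
      h₁ s - h₂ s = γ * deriv Φ s + μ ^ 2 * Φ s := by
    filter_upwards [hode1, hode2] with s e1 e2
    rw [hdΦ]
    simp only [hΦdef]
    linarith
  -- integral identity for deriv Φ
  have hkey : ∀ t : ℝ, 0 ≤ t →
      deriv Φ t = deriv Φ 0 + ∫ s in (0:ℝ)..t, (γ * deriv Φ s + μ ^ 2 * Φ s) := by
    intro t ht
    have e1 := hint1 t ht
    have e2 := hint2 t ht
    have hsub : (∫ s in (0:ℝ)..t, h₁ s) - ∫ s in (0:ℝ)..t, h₂ s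
        = ∫ s in (0:ℝ)..t, (h₁ s - h₂ s) :=
      (intervalIntegral.integral_sub (hII h₁ hloc1 t ht) (hII h₂ hloc2 t ht)).symm
    have hcg : ∫ s in (0:ℝ)..t, (h₁ s - h₂ s)
        = ∫ s in (0:ℝ)..t, (γ * deriv Φ s + μ ^ 2 * Φ s) := by
      apply intervalIntegral.integral_congr_ae
      have hsubset : Set.uIoc (0:ℝ) t ⊆ Set.Ici 0 := by
        rw [Set.uIoc_of_le ht]
        exact fun x hx => hx.1.le
      have hres := ae_restrict_of_ae_restrict_of_subset hsubset haeq
      exact (ae_restrict_iff' measurableSet_uIoc).1 hres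
    rw [← hcg, ← hsub, hdΦ]
    simp only
    rw [e1, e2]
    ring
  have hFTCΦ : ∀ t : ℝ, Φ t = ∫ s in (0:ℝ)..t, deriv Φ s := by
    intro t
    have h := intervalIntegral.integral_eq_sub_of_hasDerivAt (f := Φ)
      (f' := deriv Φ) (fun s _ => (hΦd s).hasDerivAt) (hΦ'cont.intervalIntegrable 0 t)
    rw [h, hΦ0, sub_zero]
  set w : ℝ → ℝ := fun t => deriv Φ t - a * Φ t with hwdef
  set z : ℝ → ℝ := fun t => deriv Φ t - b * Φ t with hzdef
  have hwcont : Continuous w := hΦ'cont.sub (continuous_const.mul hΦcont)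
  have hzcont : Continuous z := hΦ'cont.sub (continuous_const.mul hΦcont)
  have hγ : γ = a + b := hsum.symm
  have hwode : ∀ t : ℝ, 0 ≤ t → w t = w 0 + ∫ s in (0:ℝ)..t, b * w s := by
    intro t ht
    have hsub : (∫ s in (0:ℝ)..t, (γ * deriv Φ s + μ ^ 2 * Φ s))
          - a * ∫ s in (0:ℝ)..t, deriv Φ s
        = ∫ s in (0:ℝ)..t, b * w s := by
      rw [← intervalIntegral.integral_const_mul,
        ← intervalIntegral.integral_sub (f := fun s => γ * deriv Φ s + μ ^ 2 * Φ s)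
          (g := fun s => a * deriv Φ s)
          (Continuous.intervalIntegrable
            ((continuous_const.mul hΦ'cont).add (continuous_const.mul hΦcont)) 0 t)
          (Continuous.intervalIntegrable (continuous_const.mul hΦ'cont) 0 t)]
      apply intervalIntegral.integral_congr
      intro s _
      simp only [hwdef, hγ]
      linear_combination (Φ s) * hmul
    have hg1 : deriv Φ t - deriv Φ 0 = ∫ s in (0:ℝ)..t, (γ * deriv Φ s + μ ^ 2 * Φ s) := by
      rw [hkey t ht]; ring
    have hwt : w t = deriv Φ t - a * Φ t := rfl
    have hw0 : w 0 = deriv Φ 0 - a * Φ 0 := rfl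
    rw [hwt, hw0, hΦ0, ← hsub, ← hFTCΦ t]
    linarith
  have hzode : ∀ t : ℝ, 0 ≤ t → z t = z 0 + ∫ s in (0:ℝ)..t, a * z s := by
    intro t ht
    have hsub : (∫ s in (0:ℝ)..t, (γ * deriv Φ s + μ ^ 2 * Φ s))
          - b * ∫ s in (0:ℝ)..t, deriv Φ s
        = ∫ s in (0:ℝ)..t, a * z s := by
      rw [← intervalIntegral.integral_const_mul,
        ← intervalIntegral.integral_sub (f := fun s => γ * deriv Φ s + μ ^ 2 * Φ s)
          (g := fun s => b * deriv Φ s)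
          (Continuous.intervalIntegrable
            ((continuous_const.mul hΦ'cont).add (continuous_const.mul hΦcont)) 0 t)
          (Continuous.intervalIntegrable (continuous_const.mul hΦ'cont) 0 t)]
      apply intervalIntegral.integral_congr
      intro s _
      simp only [hzdef, hγ]
      linear_combination (Φ s) * hmul
    have hg1 : deriv Φ t - deriv Φ 0 = ∫ s in (0:ℝ)..t, (γ * deriv Φ s + μ ^ 2 * Φ s) := by
      rw [hkey t ht]; ring
    have hzt : z t = deriv Φ t - b * Φ t := rfl
    have hz0 : z 0 = deriv Φ 0 - b * Φ 0 := rfl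
    rw [hzt, hz0, hΦ0, ← hsub, ← hFTCΦ t]
    linarith
  have hw := linODE w hwcont b hwode
  have hz := linODE z hzcont a hzode
  have hbound : ∀ (Ψ : ℝ → ℝ) (B : ℝ),
      (∀ t : ℝ, 0 ≤ t → Real.exp (δ * t) * (|Ψ t| + |deriv Ψ t|) ≤ B) →
      ∀ t : ℝ, 0 ≤ t → |Ψ t| ≤ B := by
    intro Ψ B hB t ht
    have h := hB t ht
    have he : (1:ℝ) ≤ Real.exp (δ * t) := Real.one_le_exp (by positivity)
    nlinarith [abs_nonneg (Ψ t), abs_nonneg (deriv Ψ t)]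
  have hΦb : ∀ t : ℝ, 0 ≤ t → |Φ t| ≤ B1 + B2 := by
    intro t ht
    have g1 := hbound Ψ₁ B1 hB1 t ht
    have g2 := hbound Ψ₂ B2 hB2 t ht
    simp only [hΦdef]
    calc |Ψ₁ t - Ψ₂ t| ≤ |Ψ₁ t| + |Ψ₂ t| := abs_sub _ _
      _ ≤ B1 + B2 := add_le_add g1 g2
  have hrel : ∀ t : ℝ, (a - b) * Φ t = z t - w t := by
    intro t; simp only [hwdef, hzdef]; ring
  set M : ℝ := (a - b) * (B1 + B2) + |w 0| with hMdef
  have hM : ∀ t : ℝ, 0 ≤ t → |z 0| * Real.exp (a * t) ≤ M := by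
    intro t ht
    have h1 : z t = (a - b) * Φ t + w t := by linarith [hrel t]
    have h4 : Real.exp (b * t) ≤ 1 := by
      rw [← Real.exp_zero]
      exact Real.exp_le_exp.2 (by nlinarith)
    have h2 : |z t| ≤ (a - b) * (B1 + B2) + |w 0| := by
      rw [h1]
      have h5 : |w t| ≤ |w 0| := by
        rw [hw t ht, abs_mul, abs_of_pos (Real.exp_pos _)]
        nlinarith [abs_nonneg (w 0), Real.exp_pos (b * t)]
      calc |(a - b) * Φ t + w t| ≤ |(a - b) * Φ t| + |w t| := abs_add_le _ _
        _ ≤ (a - b) * (B1 + B2) + |w 0| := by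
            apply add_le_add _ h5
            rw [abs_mul, abs_of_pos (show (0:ℝ) < a - b from by linarith)]
            exact mul_le_mul_of_nonneg_left (hΦb t ht) (by linarith)
    have h3 : |z t| = |z 0| * Real.exp (a * t) := by
      rw [hz t ht, abs_mul, abs_of_pos (Real.exp_pos _)]
    rw [← h3, hMdef]
    exact h2
  have hz00 : z 0 = 0 := by
    by_contra hz0ne
    have habs : 0 < |z 0| := abs_pos.2 hz0ne
    have hMnn : 0 ≤ M := by
      have h := hM 0 le_rfl
      nlinarith [Real.exp_pos (a * (0:ℝ)), abs_nonneg (z 0),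
        Real.exp_le_exp.2 (le_of_eq (mul_zero a).symm)]
    have hfrac : 0 < (M + 1) / |z 0| := by positivity
    set T : ℝ := max 0 (Real.log ((M + 1) / |z 0|) / a) with hTdef
    have hT0 : 0 ≤ T := le_max_left _ _
    have hTlog : Real.log ((M + 1) / |z 0|) / a ≤ T := le_max_right _ _
    have hloga : Real.log ((M + 1) / |z 0|) ≤ a * T := by
      rw [div_le_iff₀ ha] at hTlog
      linarith [hTlog]
    have hexp : (M + 1) / |z 0| ≤ Real.exp (a * T) := by
      calc (M + 1) / |z 0| = Real.exp (Real.log ((M + 1) / |z 0|)) := (Real.exp_log hfrac).symm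
        _ ≤ Real.exp (a * T) := Real.exp_le_exp.2 hloga
    have hcon : M + 1 ≤ |z 0| * Real.exp (a * T) := by
      rw [div_le_iff₀ habs] at hexp
      linarith [hexp]
    linarith [hM T hT0]
  have hw00 : w 0 = 0 := by
    have h := hrel 0
    rw [hΦ0, mul_zero, hz00] at h
    linarith
  intro t ht
  have h1 := hrel t
  rw [hw t ht, hz t ht, hw00, hz00, zero_mul, zero_mul, sub_zero] at h1
  have hΦt : Φ t = 0 := by
    have hab : (0:ℝ) < a - b := by linarith
    nlinarith [h1]
  simp only [hΦdef] at hΦt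
  exact sub_eq_zero.1 hΦt

end Stmt12Aux

open Stmt12Aux in
/-- the map `Ψ ↦ −Ψ'' + γΨ' + μ²Ψ` is an isomorphism
`W²_δ → L¹_δ` when `0 ≤ δ < √(γ²/4 + μ²) − γ/2`. -/
theorem stmt12 (δ γ μ : ℝ) (hδ0 : 0 ≤ δ) (hγ : 0 ≤ γ) (hμ : 0 ≤ μ)
    (hlt : δ < Real.sqrt (γ ^ 2 / 4 + μ ^ 2) - γ / 2) :
    ∃ C : ℝ, 0 < C ∧
      ∀ g : ℝ → ℝ, MeasureTheory.LocallyIntegrableOn g (Set.Ici 0) →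
        (∃ A : ℝ, Norm1Bound δ g A) →
        (∃ Ψ h : ℝ → ℝ, W2Sol δ γ μ g Ψ h ∧
          ∀ Ψ' h' : ℝ → ℝ, W2Sol δ γ μ g Ψ' h' → Set.EqOn Ψ Ψ' (Set.Ici 0)) ∧
        (∀ Ψ h : ℝ → ℝ, ∀ A : ℝ, W2Sol δ γ μ g Ψ h → Norm1Bound δ g A →
          (∀ t : ℝ, 0 ≤ t → Real.exp (δ * t) * (|Ψ t| + |deriv Ψ t|) ≤ C * A) ∧
          Norm1Bound δ h (C * A)) := by
  classical
  set S : ℝ := Real.sqrt (γ ^ 2 / 4 + μ ^ 2) with hSdef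
  have hS2 : S ^ 2 = γ ^ 2 / 4 + μ ^ 2 := Real.sq_sqrt (by positivity)
  set a : ℝ := γ / 2 + S with hadef
  set b : ℝ := γ / 2 - S with hbdef
  have hbδ : b + δ < 0 := by rw [hbdef]; linarith
  have hb : b < 0 := by linarith
  have ha : 0 < a := by rw [hadef]; linarith
  have hsum : a + b = γ := by rw [hadef, hbdef]; ring
  have hmulab : a * b = -μ ^ 2 := by rw [hadef, hbdef]; nlinarith [hS2]
  have hκ : 0 < -(b + δ) := by linarith
  have hCu : 0 < Cu δ a := by
    simp only [Cu]; rw [inv_pos]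
    have := Real.exp_lt_one_iff.2 (show -(a + δ) < 0 from by linarith)
    linarith
  have hCp : 0 < Cp δ a b := mul_pos hCu (inv_pos.2 hκ)
  have hCq : 0 < Cq δ a b := by
    have hnb : 0 ≤ (-b) * Cp δ a b := mul_nonneg (by linarith) hCp.le
    simp only [Stmt12Aux.Cq]; linarith
  set Ch : ℝ := γ * Cq δ a b + μ ^ 2 * Cp δ a b + 1 with hChdef
  have hCh : 0 < Ch := by
    have h1 : 0 ≤ γ * Cq δ a b := mul_nonneg hγ hCq.le
    have h2 : 0 ≤ μ ^ 2 * Cp δ a b := mul_nonneg (sq_nonneg μ) hCp.le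
    rw [hChdef]; linarith
  set C : ℝ := (Cp δ a b + Cq δ a b) + Ch with hCdef
  have hC : 0 < C := by rw [hCdef]; linarith
  refine ⟨C, hC, ?_⟩
  intro g hgloc hgA
  obtain ⟨A₀, hA₀⟩ := hgA
  set G : ℝ → ℝ := (Set.Ici (0:ℝ)).indicator g with hGdef
  have hGg : ∀ s : ℝ, 0 ≤ s → G s = g s := fun s hs => Set.indicator_of_mem hs g
  have hGloc : MeasureTheory.LocallyIntegrable G volume := by
    rw [MeasureTheory.locallyIntegrable_iff]
    intro k hk
    have h1 : IntegrableOn g (Set.Ici 0 ∩ k) volume :=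
      hgloc.integrableOn_compact_subset Set.inter_subset_left (hk.inter_left isClosed_Ici)
    rw [hGdef, MeasureTheory.IntegrableOn,
      MeasureTheory.integrable_indicator_iff measurableSet_Ici, MeasureTheory.IntegrableOn,
      Measure.restrict_restrict measurableSet_Ici]
    exact h1
  have hGI : ∀ x y : ℝ, IntervalIntegrable G volume x y := fun x y =>
    IntegrableOn.intervalIntegrable (hGloc.integrableOn_isCompact isCompact_uIcc)
  have hN : ∀ A : ℝ, Norm1Bound δ g A → Norm1Bound δ G A := by
    intro A hA t ht
    have he : ∫ s in t..(t + 1), |G s| = ∫ s in t..(t + 1), |g s| := by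
      apply intervalIntegral.integral_congr
      intro x hx
      rw [Set.uIcc_of_le (by linarith)] at hx
      simp only [hGg x (le_trans ht hx.1)]
    rw [he]; exact hA t ht
  obtain ⟨Ψ₀, hΨC1, hΨ00, hbnds, hint⟩ := exists_sol δ a b A₀ G hGloc hδ0 ha hbδ (hN A₀ hA₀)
  set h₀ : ℝ → ℝ := fun s => γ * deriv Ψ₀ s + μ ^ 2 * Ψ₀ s - G s with hh₀def
  have hfun : ∀ s, (a + b) * deriv Ψ₀ s - a * b * Ψ₀ s - G s = h₀ s := by
    intro s; simp only [hh₀def]; rw [hsum, hmulab]; ring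
  have hint' : ∀ t : ℝ, 0 ≤ t → deriv Ψ₀ t = deriv Ψ₀ 0 + ∫ s in (0:ℝ)..t, h₀ s := by
    intro t ht
    rw [hint t ht]
    congr 1
    apply intervalIntegral.integral_congr
    intro s _
    exact hfun s
  have hderivcont : Continuous (deriv Ψ₀) := hΨC1.continuous_deriv le_rfl
  have hΨcont : Continuous Ψ₀ := hΨC1.continuous
  have hcc : Continuous (fun s => γ * deriv Ψ₀ s + μ ^ 2 * Ψ₀ s) :=
    (continuous_const.mul hderivcont).add (continuous_const.mul hΨcont)
  have hh₀loc : MeasureTheory.LocallyIntegrable h₀ volume := hcc.locallyIntegrable.sub hGloc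
  have hexp1 : ∀ t : ℝ, Real.exp (δ * t) * Real.exp (-(δ * t)) = 1 := by
    intro t; rw [← Real.exp_add, show δ * t + -(δ * t) = 0 from by ring, Real.exp_zero]
  have hh₀bound : ∀ A : ℝ, Norm1Bound δ g A → Norm1Bound δ h₀ (Ch * A) := by
    intro A hA t ht
    have hA0 : 0 ≤ A := norm1_nonneg δ A g hA
    set D : ℝ := (γ * Cq δ a b + μ ^ 2 * Cp δ a b) * A * Real.exp (-(δ * t)) with hDdef
    have hD0 : 0 ≤ D := by
      rw [hDdef]
      have h1 : 0 ≤ γ * Cq δ a b := mul_nonneg hγ hCq.le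
      have h2 : 0 ≤ μ ^ 2 * Cp δ a b := mul_nonneg (sq_nonneg μ) hCp.le
      positivity
    have hb1 : ∀ x ∈ Set.Icc t (t + 1), |h₀ x| ≤ D + |G x| := by
      intro x hx
      have hx0 : 0 ≤ x := le_trans ht hx.1
      obtain ⟨hbp, hbq⟩ := hbnds A (hN A hA) x hx0
      have hmono : Real.exp (-(δ * x)) ≤ Real.exp (-(δ * t)) :=
        Real.exp_le_exp.2 (by nlinarith [hx.1])
      have h1 : |h₀ x| ≤ γ * |deriv Ψ₀ x| + μ ^ 2 * |Ψ₀ x| + |G x| := by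
        simp only [hh₀def]
        calc |γ * deriv Ψ₀ x + μ ^ 2 * Ψ₀ x - G x|
            ≤ |γ * deriv Ψ₀ x + μ ^ 2 * Ψ₀ x| + |G x| := abs_sub _ _
          _ ≤ |γ * deriv Ψ₀ x| + |μ ^ 2 * Ψ₀ x| + |G x| := by
              linarith [abs_add_le (γ * deriv Ψ₀ x) (μ ^ 2 * Ψ₀ x)]
          _ = γ * |deriv Ψ₀ x| + μ ^ 2 * |Ψ₀ x| + |G x| := by
              rw [abs_mul, abs_mul, abs_of_nonneg hγ, abs_of_nonneg (sq_nonneg μ)]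
      have h3 : γ * |deriv Ψ₀ x| ≤ γ * Cq δ a b * A * Real.exp (-(δ * t)) := by
        calc γ * |deriv Ψ₀ x| ≤ γ * (Cq δ a b * A * Real.exp (-(δ * x))) :=
            mul_le_mul_of_nonneg_left hbq hγ
          _ ≤ γ * (Cq δ a b * A * Real.exp (-(δ * t))) := by
              apply mul_le_mul_of_nonneg_left _ hγ
              exact mul_le_mul_of_nonneg_left hmono (by positivity)
          _ = γ * Cq δ a b * A * Real.exp (-(δ * t)) := by ring
      have h4 : μ ^ 2 * |Ψ₀ x| ≤ μ ^ 2 * Cp δ a b * A * Real.exp (-(δ * t)) := by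
        calc μ ^ 2 * |Ψ₀ x| ≤ μ ^ 2 * (Cp δ a b * A * Real.exp (-(δ * x))) :=
            mul_le_mul_of_nonneg_left hbp (sq_nonneg μ)
          _ ≤ μ ^ 2 * (Cp δ a b * A * Real.exp (-(δ * t))) := by
              apply mul_le_mul_of_nonneg_left _ (sq_nonneg μ)
              exact mul_le_mul_of_nonneg_left hmono (by positivity)
          _ = μ ^ 2 * Cp δ a b * A * Real.exp (-(δ * t)) := by ring
      have hDeq : D = γ * Cq δ a b * A * Real.exp (-(δ * t))
          + μ ^ 2 * Cp δ a b * A * Real.exp (-(δ * t)) := by rw [hDdef]; ring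
      linarith
    have hIIh : IntervalIntegrable h₀ volume t (t + 1) :=
      IntegrableOn.intervalIntegrable (hh₀loc.integrableOn_isCompact isCompact_uIcc)
    have hImono : ∫ x in t..(t + 1), |h₀ x| ≤ ∫ x in t..(t + 1), (D + |G x|) := by
      apply intervalIntegral.integral_mono_on (by linarith) hIIh.abs
        (intervalIntegrable_const.add ((hGI t (t + 1)).abs))
      exact hb1
    have hIsplit : ∫ x in t..(t + 1), (D + |G x|) = D + ∫ x in t..(t + 1), |G x| := by
      rw [intervalIntegral.integral_add (intervalIntegrable_const) ((hGI t (t + 1)).abs),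
        intervalIntegral.integral_const]
      simp
    have hGb : ∫ s in t..(t + 1), |G s| ≤ A * Real.exp (-(δ * t)) := by
      have h := hN A hA t ht
      rw [mul_comm] at h
      have hepos : (0:ℝ) < Real.exp (δ * t) := Real.exp_pos _
      rw [Real.exp_neg, show A * (Real.exp (δ * t))⁻¹ = A / Real.exp (δ * t) from by ring,
        le_div_iff₀ hepos]
      exact h
    calc Real.exp (δ * t) * ∫ s in t..(t + 1), |h₀ s|
        ≤ Real.exp (δ * t) * (D + A * Real.exp (-(δ * t))) := by
          apply mul_le_mul_of_nonneg_left _ (Real.exp_pos _).le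
          calc (∫ x in t..(t + 1), |h₀ x|) ≤ ∫ x in t..(t + 1), (D + |G x|) := hImono
            _ = D + ∫ x in t..(t + 1), |G x| := hIsplit
            _ ≤ D + A * Real.exp (-(δ * t)) := by linarith [hGb]
      _ = (γ * Cq δ a b + μ ^ 2 * Cp δ a b + 1) * A * (Real.exp (δ * t) * Real.exp (-(δ * t)))
          := by rw [hDdef]; ring
      _ = Ch * A := by rw [hexp1, hChdef]; ring
  have hsupbound : ∀ A : ℝ, Norm1Bound δ g A → ∀ t : ℝ, 0 ≤ t →
      Real.exp (δ * t) * (|Ψ₀ t| + |deriv Ψ₀ t|) ≤ (Cp δ a b + Cq δ a b) * A := by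
    intro A hA t ht
    obtain ⟨hbp, hbq⟩ := hbnds A (hN A hA) t ht
    calc Real.exp (δ * t) * (|Ψ₀ t| + |deriv Ψ₀ t|)
        ≤ Real.exp (δ * t) * (Cp δ a b * A * Real.exp (-(δ * t))
            + Cq δ a b * A * Real.exp (-(δ * t))) :=
          mul_le_mul_of_nonneg_left (add_le_add hbp hbq) (Real.exp_pos _).le
      _ = (Cp δ a b + Cq δ a b) * A * (Real.exp (δ * t) * Real.exp (-(δ * t))) := by ring
      _ = (Cp δ a b + Cq δ a b) * A := by rw [hexp1, mul_one]
  have hsol : W2Sol δ γ μ g Ψ₀ h₀ := by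
    refine ⟨hΨC1, hΨ00, ⟨(Cp δ a b + Cq δ a b) * A₀, hsupbound A₀ hA₀⟩,
      (hh₀loc.locallyIntegrableOn _), hint', ⟨Ch * A₀, hh₀bound A₀ hA₀⟩, ?_⟩
    refine (ae_restrict_iff' measurableSet_Ici).2 (Filter.Eventually.of_forall ?_)
    intro x hx
    simp only [hh₀def]
    rw [hGg x hx]
    ring
  have hdtrans : ∀ (Ψ : ℝ → ℝ), ContDiff ℝ 1 Ψ → Set.EqOn Ψ₀ Ψ (Set.Ici 0) →
      Set.EqOn (deriv Ψ₀) (deriv Ψ) (Set.Ici 0) := by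
    intro Ψ hΨ heq
    have hio : Set.EqOn (deriv Ψ₀) (deriv Ψ) (Set.Ioi 0) := by
      intro x hx
      apply Filter.EventuallyEq.deriv_eq
      exact Filter.eventuallyEq_of_mem (IsOpen.mem_nhds isOpen_Ioi hx)
        (fun y hy => heq (le_of_lt hy : (0:ℝ) ≤ y))
    have hcl := hio.closure (hΨC1.continuous_deriv le_rfl) (hΨ.continuous_deriv le_rfl)
    rw [closure_Ioi] at hcl
    exact hcl
  refine ⟨⟨Ψ₀, h₀, hsol, ?_⟩, ?_⟩
  · intro Ψ' h' hsol'
    exact uniq δ γ μ a b g Ψ₀ h₀ Ψ' h' hδ0 ha hb hsum hmulab hsol hsol'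
  · intro Ψ h A hsol2 hA
    have hequ : Set.EqOn Ψ₀ Ψ (Set.Ici 0) :=
      uniq δ γ μ a b g Ψ₀ h₀ Ψ h hδ0 ha hb hsum hmulab hsol hsol2
    have hdeq := hdtrans Ψ hsol2.1 hequ
    have hA0 : 0 ≤ A := norm1_nonneg δ A g hA
    constructor
    · intro t ht
      rw [← hequ ht, ← hdeq ht]
      have h1 := hsupbound A hA t ht
      have h2 : (Cp δ a b + Cq δ a b) * A ≤ C * A :=
        mul_le_mul_of_nonneg_right (by rw [hCdef]; linarith) hA0
      linarith
    · intro t ht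
      have haeh : ∀ᵐ s ∂(volume.restrict (Set.Ici (0:ℝ))), h s = h₀ s := by
        have hode := hsol2.2.2.2.2.2.2
        rw [show (volume.restrict (Set.Ici (0:ℝ))) = volume.restrict (Set.Ici (0:ℝ)) from rfl]
        filter_upwards [hode, (ae_restrict_iff' measurableSet_Ici).2
          (Filter.Eventually.of_forall (fun x (hx : x ∈ Set.Ici (0:ℝ)) => hx))] with s e1 hs
        simp only [hh₀def]
        rw [← hequ hs, ← hdeq hs] at e1
        rw [hGg s hs]
        linarith
      have hiq : ∫ s in t..(t + 1), |h s| = ∫ s in t..(t + 1), |h₀ s| := by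
        apply intervalIntegral.integral_congr_ae
        have hsubset : Set.uIoc t (t + 1) ⊆ Set.Ici 0 := by
          rw [Set.uIoc_of_le (by linarith)]
          exact fun x hx => le_trans ht hx.1.le
        have hres := ae_restrict_of_ae_restrict_of_subset hsubset haeh
        have hres2 := (ae_restrict_iff' measurableSet_uIoc).1 hres
        filter_upwards [hres2] with x hx hmem
        rw [hx hmem]
      rw [hiq]
      have h1 := hh₀bound A hA t ht
      have h2 : Ch * A ≤ C * A :=
        mul_le_mul_of_nonneg_right (by rw [hCdef]; linarith) hA0
      linarith
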